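/- arXiv:2202.11007 — 2 statements merged into one kernel-verified Lean document; each statement's English description precedes it below -/
import Mathlib

section
/- Let T > 0, m > 0 and H ≥ 0 with H/m < 1. Let y : [0,T] → ℝ be differentiable with −H ≤ y′(t) + m·y(t) ≤ H for every t ∈ [0,T], and assume |y(0)| < 1. Then, setting δ := min(1 − |y(0)|, 1 − H/m) > 0, one has |y(t)| ≤ 1 − δ for every t ∈ [0,T]. -/
lemma aux_upper (T m H : ℝ) (hm : 0 < m)
    (y y' : ℝ → ℝ)
    (hderiv : ∀ t ∈ Set.Icc (0:ℝ) T, HasDerivWithinAt y (y' t) (Set.Icc (0:ℝ) T) t)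
    (hy : ∀ t ∈ Set.Icc (0:ℝ) T, y' t + m * y t ≤ H) :
    ∀ t ∈ Set.Icc (0:ℝ) T, y t ≤ max (y 0) (H / m) := by
  set u : ℝ → ℝ := fun t => H / m * Real.exp (m * t) - Real.exp (m * t) * y t with hu
  have hmono : MonotoneOn u (Set.Icc 0 T) := by
    apply monotoneOn_of_hasDerivWithinAt_nonneg (convex_Icc 0 T)
      (f' := fun t => H * Real.exp (m * t) - Real.exp (m * t) * (y' t + m * y t))
    · -- continuity
      have : ∀ t ∈ Set.Icc (0:ℝ) T, ContinuousWithinAt y (Set.Icc 0 T) t :=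
        fun t ht => (hderiv t ht).continuousWithinAt
      exact ContinuousOn.sub (by fun_prop) (ContinuousOn.mul (by fun_prop) this)
    · intro x hx
      have hx' : x ∈ Set.Icc (0:ℝ) T := interior_subset hx
      have h1 : HasDerivWithinAt (fun t => Real.exp (m * t)) (m * Real.exp (m * x))
          (interior (Set.Icc (0:ℝ) T)) x := by
        have := ((Real.hasDerivAt_exp (m * x)).comp x ((hasDerivAt_id x).const_mul m))
        exact this.hasDerivWithinAt.congr_deriv (by ring)
      have h2 : HasDerivWithinAt y (y' x) (interior (Set.Icc (0:ℝ) T)) x :=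
        (hderiv x hx').mono interior_subset
      have := ((h1.const_mul (H / m)).sub (h1.mul h2))
      refine this.congr_deriv ?_
      show H / m * (m * Real.exp (m * x)) - (m * Real.exp (m * x) * y x + Real.exp (m * x) * y' x) = H * Real.exp (m * x) - Real.exp (m * x) * (y' x + m * y x)
      rw [show H / m * (m * Real.exp (m * x)) = H * Real.exp (m * x) by rw [← mul_assoc, div_mul_cancel₀ H hm.ne']]
      ring
    · intro x hx
      have hx' : x ∈ Set.Icc (0:ℝ) T := interior_subset hx
      have := hy x hx'
      have hexp : 0 < Real.exp (m * x) := Real.exp_pos _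
      nlinarith [hexp]
  intro t ht
  have h0 : (0:ℝ) ∈ Set.Icc (0:ℝ) T := ⟨le_refl _, le_trans ht.1 ht.2⟩
  have := hmono h0 ht ht.1
  -- u 0 ≤ u t
  have hu0 : u 0 = H / m - y 0 := by simp [hu]
  have hexp : 0 < Real.exp (m * t) := Real.exp_pos _
  have hexp1 : Real.exp (m * t) ≥ 1 := by
    have : 0 ≤ m * t := mul_nonneg hm.le ht.1
    simpa using Real.one_le_exp this
  rw [hu0] at this
  -- H/m - y 0 ≤ exp(mt) * (H/m - y t)
  have key : H / m - y 0 ≤ Real.exp (m * t) * (H / m - y t) := by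
    have : H / m - y 0 ≤ H / m * Real.exp (m * t) - Real.exp (m * t) * y t := this
    nlinarith
  rcases le_or_gt (y 0) (H / m) with h | h
  · -- then H/m - y t could be negative? if so, LHS ≥ 0 contradiction? Show y t ≤ H/m
    have : 0 ≤ Real.exp (m * t) * (H / m - y t) := le_trans (by linarith) key
    have : 0 ≤ H / m - y t := nonneg_of_mul_nonneg_right this hexp
    exact le_max_of_le_right (by linarith)
  · -- y 0 > H/m: exp(mt)*(H/m - y t) ≥ H/m - y 0, and if y t > y 0 then H/m - y t < H/m - y 0 < 0
    by_contra hc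
    push_neg at hc
    have hyt : y 0 < y t := lt_of_le_of_lt (le_max_left _ _) hc
    have hneg : H / m - y t < H / m - y 0 := by linarith
    have hneg2 : H / m - y t < 0 := by linarith
    nlinarith
  where nonneg_of_mul_nonneg_right {a b : ℝ} (h : 0 ≤ b * a) (hb : 0 < b) : 0 ≤ a :=
    nonneg_of_mul_nonneg_left (by linarith [mul_comm b a]) hb

/-- Mass confinement: if `-H ≤ y' + m y ≤ H` on `[0,T]`, `H/m < 1` and `|y(0)| < 1`, then
with `δ := min (1 - |y 0|) (1 - H/m) > 0` one has `|y t| ≤ 1 - δ` on `[0,T]`. -/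
theorem stmt1 (T m H : ℝ) (hT : 0 < T) (hm : 0 < m) (hH : 0 ≤ H) (hHm : H / m < 1)
    (y y' : ℝ → ℝ)
    (hderiv : ∀ t ∈ Set.Icc (0:ℝ) T, HasDerivWithinAt y (y' t) (Set.Icc (0:ℝ) T) t)
    (hineq : ∀ t ∈ Set.Icc (0:ℝ) T, -H ≤ y' t + m * y t ∧ y' t + m * y t ≤ H)
    (h0 : |y 0| < 1) :
    0 < min (1 - |y 0|) (1 - H / m) ∧
    ∀ t ∈ Set.Icc (0:ℝ) T, |y t| ≤ 1 - min (1 - |y 0|) (1 - H / m) := by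
  constructor
  · exact lt_min (by linarith) (by linarith)
  · intro t ht
    set δ := min (1 - |y 0|) (1 - H / m) with hδ
    have hδ1 : δ ≤ 1 - |y 0| := min_le_left _ _
    have hδ2 : δ ≤ 1 - H / m := min_le_right _ _
    have hupper := aux_upper T m H hm y y' hderiv (fun t ht => (hineq t ht).2) t ht
    have hlower := aux_upper T m H hm (fun s => -y s) (fun s => -y' s)
      (fun s hs => (hderiv s hs).neg)
      (fun s hs => by have := (hineq s hs).1; simp; linarith) t ht
    have hy0 : |y 0| ≤ 1 - δ := by linarith
    have hHm' : H / m ≤ 1 - δ := by linarith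
    have h1 : y t ≤ 1 - δ := le_trans hupper (max_le (le_trans (le_abs_self _) hy0) hHm')
    have h2 : -y t ≤ 1 - δ := le_trans hlower (max_le (le_trans (neg_le_abs _) hy0) hHm')
    exact abs_le.mpr ⟨by linarith, h1⟩
end

section
/- Let f : (−1, 1) → ℝ be nondecreasing with f(0) = 0, let δ ∈ (0, 1), and let m ∈ ℝ with |m| ≤ 1 − δ. Then, with C₀ := max(|f(1 − δ/2)|, |f(−1 + δ/2)|) and c := (2 + δ/2)·C₀, one has f(r)·(r − m) ≥ (δ/2)·|f(r)| − c for every r ∈ (−1, 1). -/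
/-- Pointwise coercivity estimate behind (co:17): for a nondecreasing `f` on `(-1,1)` with
`f 0 = 0` and a mean `m` with `|m| ≤ 1 - δ`, one has `f(r)(r-m) ≥ (δ/2)|f r| - c`. -/
theorem stmt6 (f : ℝ → ℝ)
    (hmono : ∀ r ∈ Set.Ioo (-1:ℝ) 1, ∀ s ∈ Set.Ioo (-1:ℝ) 1, r ≤ s → f r ≤ f s)
    (hf0 : f 0 = 0) (δ : ℝ) (hδ : δ ∈ Set.Ioo (0:ℝ) 1) (m : ℝ) (hm : |m| ≤ 1 - δ) :
    ∀ r ∈ Set.Ioo (-1:ℝ) 1,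
      f r * (r - m) ≥
        (δ / 2) * |f r| - (2 + δ / 2) * max |f (1 - δ / 2)| |f (-1 + δ / 2)| := by
  obtain ⟨hδ0, hδ1⟩ := hδ
  intro r hr
  obtain ⟨hr1, hr2⟩ := hr
  have h0mem : (0:ℝ) ∈ Set.Ioo (-1:ℝ) 1 := by constructor <;> norm_num
  have hpmem : (1 - δ/2) ∈ Set.Ioo (-1:ℝ) 1 := by constructor <;> nlinarith
  have hnmem : (-1 + δ/2) ∈ Set.Ioo (-1:ℝ) 1 := by constructor <;> nlinarith
  have hm1 := abs_le.mp hm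
  set C : ℝ := max |f (1 - δ / 2)| |f (-1 + δ / 2)| with hC
  have hC0 : 0 ≤ C := le_trans (abs_nonneg _) (le_max_left _ _)
  rcases le_or_gt (1 - δ/2) r with hcase | hcase
  · -- r ≥ 1 - δ/2
    have hfr : 0 ≤ f r := by
      have := hmono 0 h0mem r ⟨hr1, hr2⟩ (by nlinarith)
      linarith [hf0 ▸ this]
    have habs : |f r| = f r := abs_of_nonneg hfr
    have hrm : δ/2 ≤ r - m := by nlinarith [hm1.2]
    nlinarith [mul_le_mul_of_nonneg_left hrm hfr]
  rcases le_or_gt r (-1 + δ/2) with hcase2 | hcase2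
  · -- r ≤ -1 + δ/2
    have hfr : f r ≤ 0 := by
      have := hmono r ⟨hr1, hr2⟩ 0 h0mem (by nlinarith)
      linarith [hf0 ▸ this]
    have habs : |f r| = -f r := abs_of_nonpos hfr
    have hrm : r - m ≤ -(δ/2) := by nlinarith [hm1.1]
    nlinarith [mul_le_mul_of_nonpos_left hrm hfr]
  · -- middle case
    have h1 : f r ≤ f (1 - δ/2) := hmono r ⟨hr1, hr2⟩ _ hpmem (le_of_lt hcase)
    have h2 : f (-1 + δ/2) ≤ f r := hmono _ hnmem r ⟨hr1, hr2⟩ (le_of_lt hcase2)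
    have hfC : |f r| ≤ C := by
      rw [abs_le]
      constructor
      · have := neg_abs_le (f (-1 + δ/2))
        have := le_max_right |f (1 - δ / 2)| |f (-1 + δ / 2)|
        linarith
      · have := le_abs_self (f (1 - δ/2))
        have := le_max_left |f (1 - δ / 2)| |f (-1 + δ / 2)|
        linarith
    have hrm : |r - m| ≤ 2 := by
      rw [abs_le]; constructor <;> nlinarith [hm1.1, hm1.2]
    have hlb : -(C * 2) ≤ f r * (r - m) := by
      have := neg_abs_le (f r * (r - m))
      have habs : |f r * (r - m)| ≤ C * 2 := by
        rw [abs_mul]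
        exact mul_le_mul hfC hrm (abs_nonneg _) hC0
      linarith
    nlinarith [abs_nonneg (f r)]
end
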